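/- If X is a countable compact Hausdorff topological space, then there exists an ordinal α with D^α(X) = ∅; consequently every point x ∈ X has a well-defined Cantor–Bendixson rank, i.e., there is a unique ordinal β with x ∈ D^β(X) \ D^{β+1}(X). -/

import Mathlib

universe u

/-- `cbD A` is the set of points of `A` that are accumulation points of `A`,
i.e. the non-isolated points of the subspace `A`. -/
def cbD {X : Type u} [TopologicalSpace X] (A : Set X) : Set X :=
  A ∩ derivedSet A

/-- Transfinite iterates of the derived-set operator:
`cbIter A 0 = A`, `cbIter A (α+1) = cbD (cbIter A α)`, and
`cbIter A α = ⋂_{β<α} cbIter A β` at limit ordinals. -/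
noncomputable def cbIter {X : Type u} [TopologicalSpace X] (A : Set X) (o : Ordinal.{u}) :
    Set X :=
  Ordinal.limitRecOn o A (fun _ ih => cbD ih)
    (fun o _ ih => ⋂ (b : Ordinal.{u}) (h : b < o), ih b h)

section aux

variable {X : Type u} [TopologicalSpace X] (A : Set X)

lemma cbIter_zero : cbIter A 0 = A := Ordinal.limitRecOn_zero _ _ _

lemma cbIter_succ (o : Ordinal.{u}) : cbIter A (o + 1) = cbD (cbIter A o) := by
  rw [Ordinal.add_one_eq_succ]
  exact Ordinal.limitRecOn_succ _ _ _ _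

lemma cbIter_limit (o : Ordinal.{u}) (h : Order.IsSuccLimit o) :
    cbIter A o = ⋂ (b : Ordinal.{u}) (_ : b < o), cbIter A b :=
  Ordinal.limitRecOn_limit _ _ _ _ h

lemma cbIter_anti {a b : Ordinal.{u}} (h : a ≤ b) : cbIter A b ⊆ cbIter A a := by
  induction b using Ordinal.induction with
  | h b ih =>
    rcases eq_or_lt_of_le h with rfl | hlt
    · exact subset_rfl
    rcases Ordinal.zero_or_succ_or_isSuccLimit b with rfl | ⟨c, rfl⟩ | hlim
    · exact absurd hlt (not_lt_of_ge (zero_le (a := a)))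
    · rw [← Ordinal.add_one_eq_succ, cbIter_succ]
      exact Set.inter_subset_left.trans (ih c (by simp) (Order.lt_succ_iff.mp hlt))
    · rw [cbIter_limit A b hlim]
      exact Set.biInter_subset_of_mem hlt

end aux

/-- If `X` is a countable compact Hausdorff space, then some transfinite derived set
`D^α(X)` is empty, and consequently every point has a well-defined Cantor–Bendixson
rank: there is a unique ordinal `β` with `x ∈ D^β(X) \ D^{β+1}(X)`. -/
theorem countable_compact_CB_rank_exists (X : Type u) [TopologicalSpace X]
    [Countable X] [CompactSpace X] [T2Space X] :
    (∃ α : Ordinal.{u}, cbIter (Set.univ : Set X) α = ∅) ∧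
      ∀ x : X, ∃! β : Ordinal.{u},
        x ∈ cbIter (Set.univ : Set X) β \ cbIter (Set.univ : Set X) (β + 1) := by
  have hempty : ∃ α : Ordinal.{u}, cbIter (Set.univ : Set X) α = ∅ := by
    -- stabilization
    have hstab : ∃ α : Ordinal.{u},
        cbIter (Set.univ : Set X) (α + 1) = cbIter (Set.univ : Set X) α := by
      by_contra hne
      push_neg at hne
      have hch : ∀ α : Ordinal.{u}, ∃ x : X,
          x ∈ cbIter (Set.univ : Set X) α \ cbIter (Set.univ : Set X) (α + 1) := by
        intro α
        have hsub : cbIter (Set.univ : Set X) (α + 1) ⊆ cbIter (Set.univ : Set X) α :=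
          cbIter_anti _ (by rw [Ordinal.add_one_eq_succ]; exact Order.le_succ α)
        rcases Set.exists_of_ssubset (hsub.ssubset_of_ne (hne α)) with ⟨x, hx1, hx2⟩
        exact ⟨x, hx1, hx2⟩
      choose f hf1 hf2 using hch
      have hinj : Function.Injective f := by
        intro a b hab
        by_contra hab'
        wlog h : a < b generalizing a b
        · exact this hab.symm (Ne.symm hab') (lt_of_le_of_ne (not_lt.mp h) (Ne.symm hab'))
        exact hf2 a (hab ▸ cbIter_anti _ (Order.add_one_le_iff.mpr h) (hf1 b))
      exact not_small_ordinal.{u} (small_of_injective hinj)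
    obtain ⟨α, hα⟩ := hstab
    refine ⟨α, ?_⟩
    by_contra hAne
    set A := cbIter (Set.univ : Set X) α with hA
    have hpre : Preperfect A := by
      have h2 : A = cbD A := (cbIter_succ (Set.univ : Set X) α ▸ hα).symm
      have hsub : A ⊆ derivedSet A := by
        nth_rewrite 1 [h2]; exact Set.inter_subset_right
      exact fun x hx => hsub hx
    have hperf : Perfect (closure A) := hpre.perfect_closure
    have hCne : (closure A).Nonempty :=
      (Set.nonempty_iff_ne_empty.mpr hAne).closure
    set C := closure A with hC
    have hCc : IsCompact C := hperf.closed.isCompact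
    haveI : CompactSpace C := isCompact_iff_compactSpace.mp hCc
    haveI : Nonempty C := hCne.to_subtype
    have hbaire : ∃ i : C, (interior ({i} : Set C)).Nonempty := by
      apply nonempty_interior_of_iUnion_of_closed (f := fun i : C => ({i} : Set C))
      · exact fun i => isClosed_singleton
      · exact Set.iUnion_of_singleton C
    obtain ⟨i, hi⟩ := hbaire
    have hop : IsOpen ({i} : Set C) := by
      have : interior ({i} : Set C) = {i} := by
        apply Set.Subset.antisymm interior_subset
        rcases hi with ⟨y, hy⟩
        have hyi : y = i := by simpa using interior_subset hy
        subst hyi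
        intro z hz
        rw [Set.mem_singleton_iff] at hz; subst hz; exact hy
      rw [← this]; exact isOpen_interior
    rw [isOpen_induced_iff] at hop
    obtain ⟨U, hUo, hUeq⟩ := hop
    have hiU : (i : X) ∈ U := by
      have : i ∈ (Subtype.val ⁻¹' U : Set C) := hUeq ▸ rfl
      exact this
    have hacc : AccPt (i : X) (Filter.principal C) := hperf.acc (i : X) i.2
    rw [accPt_iff_nhds] at hacc
    obtain ⟨y, ⟨hyU, hyC⟩, hyne⟩ := hacc U (hUo.mem_nhds hiU)
    have : (⟨y, hyC⟩ : C) ∈ (Subtype.val ⁻¹' U : Set C) := hyU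
    rw [hUeq] at this
    exact hyne (congrArg Subtype.val this)
  refine ⟨hempty, fun x => ?_⟩
  obtain ⟨α, hα⟩ := hempty
  have hS : ∃ γ : Ordinal.{u}, x ∉ cbIter (Set.univ : Set X) γ := ⟨α, by simp [hα]⟩
  classical
  set γ0 := sInf {γ : Ordinal.{u} | x ∉ cbIter (Set.univ : Set X) γ} with hγ0
  have hγ0mem : x ∉ cbIter (Set.univ : Set X) γ0 := csInf_mem hS
  have hlt : ∀ b < γ0, x ∈ cbIter (Set.univ : Set X) b := by
    intro b hb
    by_contra hbx
    exact absurd (csInf_le' (s := {γ : Ordinal.{u} | x ∉ cbIter (Set.univ : Set X) γ}) hbx)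
      (not_le_of_gt hb)
  rcases Ordinal.zero_or_succ_or_isSuccLimit γ0 with h0 | ⟨β, hβ⟩ | hlim
  · exact absurd (by rw [h0, cbIter_zero]; trivial) hγ0mem
  · have hxβ : x ∈ cbIter (Set.univ : Set X) β := hlt β (by rw [← hβ]; exact Order.lt_succ β)
    have hxβ1 : x ∉ cbIter (Set.univ : Set X) (β + 1) := by
      rw [Ordinal.add_one_eq_succ, hβ]; exact hγ0mem
    refine ⟨β, ⟨hxβ, hxβ1⟩, ?_⟩
    rintro β' ⟨hβ'1, hβ'2⟩
    by_contra hne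
    rcases lt_or_gt_of_ne hne with h | h
    · exact hβ'2 (hlt (β' + 1) (by
        rw [← hβ, Ordinal.add_one_eq_succ]; exact Order.succ_lt_succ_iff.mpr h))
    · exact hxβ1 (cbIter_anti _ (by
        rw [Ordinal.add_one_eq_succ]; exact Order.succ_le_iff.mpr h) hβ'1)
  · exfalso
    rw [cbIter_limit _ _ hlim] at hγ0mem
    simp only [Set.mem_iInter, not_forall] at hγ0mem
    obtain ⟨b, hb, hbx⟩ := hγ0mem
    exact hbx (hlt b hb)
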